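/- If (a_n) is a strictly increasing sequence of natural numbers, all greater than 1, pairwise relatively prime, and every a_n is composite, then the series ∑ 1/a_n converges, and moreover its sum is at most P(2) = ∑_{p prime} 1/p². -/
import Mathlib

theorem stmt_0 (a : ℕ → ℕ) (hmono : StrictMono a) (h1 : ∀ n, 1 < a n)
    (hcop : ∀ m n, m ≠ n → Nat.Coprime (a m) (a n))
    (hcomp : ∀ n, ¬ (a n).Prime) :
    Summable (fun n => (1 : ℝ) / a n) ∧
      (∑' n, (1 : ℝ) / a n) ≤ ∑' p : Nat.Primes, (1 : ℝ) / (p : ℕ) ^ 2 := by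
  have hp : ∀ n, ((a n).minFac).Prime := fun n =>
    Nat.minFac_prime (Nat.ne_of_gt (h1 n))
  set P : ℕ → Nat.Primes := fun n => ⟨(a n).minFac, hp n⟩ with hP
  have hPinj : Function.Injective P := by
    intro m n h
    by_contra hmn
    have hdvd_m : (a m).minFac ∣ a m := Nat.minFac_dvd _
    have hdvd_n : (a m).minFac ∣ a n := by
      have : (a m).minFac = (a n).minFac := congrArg Subtype.val h
      rw [this]; exact Nat.minFac_dvd _
    have := Nat.eq_one_of_dvd_coprimes (hcop m n hmn) hdvd_m hdvd_n
    exact (hp m).one_lt.ne' this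
  have hsq : ∀ n, ((a n).minFac) ^ 2 ≤ a n := fun n =>
    Nat.minFac_sq_le_self (Nat.lt_of_lt_of_le Nat.zero_lt_one (le_of_lt (h1 n))) (hcomp n)
  -- summability of the prime series
  have hsum_primes : Summable (fun p : Nat.Primes => (1 : ℝ) / (p : ℕ) ^ 2) := by
    have := Nat.Primes.summable_rpow.mpr (by norm_num : (-2 : ℝ) < -1)
    refine this.congr fun p => ?_
    rw [Real.rpow_neg (by positivity), Real.rpow_two, one_div]
  have hle : ∀ n, (1 : ℝ) / a n ≤ (1 : ℝ) / ((P n : ℕ) : ℝ) ^ 2 := by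
    intro n
    apply one_div_le_one_div_of_le
    · exact_mod_cast pow_pos (hp n).pos 2
    · exact_mod_cast hsq n
  have hcomp_sum : Summable (fun n => (1 : ℝ) / ((P n : ℕ) : ℝ) ^ 2) :=
    hsum_primes.comp_injective hPinj
  have hsum : Summable (fun n => (1 : ℝ) / a n) := by
    refine Summable.of_nonneg_of_le (fun n => by positivity) hle hcomp_sum
  refine ⟨hsum, ?_⟩
  exact Summable.tsum_le_tsum_of_inj P hPinj (fun p _ => by positivity) hle hsum hsum_primes
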